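/- arXiv:1911.12241 — 2 statements merged into one kernel-verified Lean document; each statement's English description precedes it below -/
import Mathlib

section
/- Negative answer to Kreisel's question: let d ≥ 1, let f(t) = e^{-π|t|²} be the standard Gaussian on ℝ^d, let N > 1 and R > 0, and suppose there exists g ∈ L²(ℝ^d) \ {0} such that |V_g f(z)| < |⟨f,g⟩|/N for every z ∈ ℝ^{2d} with |z| > R. Then R ≥ √(2 log N / π). In particular, for R < √(2 log N / π) no such window g exists. -/
open MeasureTheory Complex Real

/-- The standard Gaussian `g(t) = e^{-π|t|²}` on `ℝ^d`, as a complex-valued function. -/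
noncomputable def gaussW (d : ℕ) : EuclideanSpace ℝ (Fin d) → ℂ :=
  fun t => Complex.exp (-(π : ℂ) * (‖t‖ : ℂ) ^ 2)

/-- The short-time Fourier transform
`V_g f(x,ω) = ∫ e^{-2πi t·ω} f(t) conj (g(t-x)) dt`. -/
noncomputable def STFT (d : ℕ) (g f : EuclideanSpace ℝ (Fin d) → ℂ)
    (x ω : EuclideanSpace ℝ (Fin d)) : ℂ :=
  ∫ t : EuclideanSpace ℝ (Fin d),
    Complex.exp (-2 * (π : ℂ) * Complex.I * ((∑ j, t j * ω j : ℝ) : ℂ)) * f t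
      * (starRingEnd ℂ) (g (t - x))

/-- The `L²` inner product `⟨f,g⟩ = ∫ f(t) conj (g(t)) dt`. -/
noncomputable def L2inner (d : ℕ) (f g : EuclideanSpace ℝ (Fin d) → ℂ) : ℂ :=
  ∫ t : EuclideanSpace ℝ (Fin d), f t * (starRingEnd ℂ) (g t)

/-! ### Auxiliary definitions and lemmas -/

/-- The Bargmann-type transform restricted to a complex line through the origin. -/
noncomputable def myI (d : ℕ) (j : Fin d) (g : EuclideanSpace ℝ (Fin d) → ℂ) (w : ℂ) : ℂ :=
  ∫ s : EuclideanSpace ℝ (Fin d),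
    Complex.exp (-(π:ℂ) * (‖s‖:ℂ)^2 - 2*(π:ℂ) * (s j : ℂ) * w) * (starRingEnd ℂ) (g s)

private lemma gauss_integrable (d : ℕ) :
    Integrable (fun s : EuclideanSpace ℝ (Fin d) => Real.exp (-π * ‖s‖^2)) := by
  have := (GaussianFourier.integrable_cexp_neg_mul_sq_norm_add_of_euclideanSpace (b := (π:ℂ))
    (by simp [Real.pi_pos]) 0 (0 : EuclideanSpace ℝ (Fin d))).norm
  simpa [Complex.norm_exp, neg_mul, ← Complex.ofReal_pow] using this

private lemma sq_bound (c r : ℝ) (hr : 0 ≤ r) :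
    ((1 + 2*π*r) * Real.exp (-π*r^2 + c*r))^2
      ≤ Real.exp ((2*c+4*π)^2/(4*π)) * Real.exp (-π*r^2) := by
  have hπ := Real.pi_pos
  have h1 : (1 + 2*π*r)^2 ≤ Real.exp (2*π*r) ^ 2 := by
    have := Real.add_one_le_exp (2*π*r)
    have h0 : (0:ℝ) ≤ 1 + 2*π*r := by positivity
    nlinarith [this, Real.exp_pos (2*π*r)]
  calc ((1 + 2*π*r) * Real.exp (-π*r^2 + c*r))^2
      = (1 + 2*π*r)^2 * (Real.exp (-π*r^2 + c*r))^2 := by ring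
    _ ≤ Real.exp (2*π*r) ^ 2 * (Real.exp (-π*r^2 + c*r))^2 := by
        have : (0:ℝ) ≤ (Real.exp (-π*r^2 + c*r))^2 := by positivity
        nlinarith [h1, this]
    _ = Real.exp (-2*π*r^2 + (2*c+4*π)*r) := by
        rw [← Real.exp_nat_mul, ← Real.exp_nat_mul, ← Real.exp_add]; ring_nf
    _ ≤ Real.exp ((2*c+4*π)^2/(4*π)) * Real.exp (-π*r^2) := by
        rw [← Real.exp_add]
        apply Real.exp_le_exp.2
        rw [div_add' _ _ _ (by positivity), le_div_iff₀ (by positivity)]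
        nlinarith [sq_nonneg (2*π*r - (2*c+4*π))]

private lemma bigBound_integrable (d : ℕ) (g : EuclideanSpace ℝ (Fin d) → ℂ)
    (hg : MemLp g 2 (volume : Measure (EuclideanSpace ℝ (Fin d)))) (c : ℝ) :
    Integrable (fun s : EuclideanSpace ℝ (Fin d) =>
      (1 + 2*π*‖s‖) * Real.exp (-π*‖s‖^2 + c*‖s‖) * ‖g s‖) := by
  set h : EuclideanSpace ℝ (Fin d) → ℝ := fun s => (1 + 2*π*‖s‖) * Real.exp (-π*‖s‖^2 + c*‖s‖)
    with hh
  have hcont : Continuous h := by fun_prop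
  have hmem : MemLp h 2 (volume : Measure (EuclideanSpace ℝ (Fin d))) := by
    rw [memLp_two_iff_integrable_sq hcont.aestronglyMeasurable]
    apply Integrable.mono' ((gauss_integrable d).const_mul (Real.exp ((2*c+4*π)^2/(4*π))))
      ((hcont.pow 2).aestronglyMeasurable)
    refine Filter.Eventually.of_forall fun s => ?_
    rw [Real.norm_eq_abs, _root_.abs_of_nonneg (sq_nonneg _)]
    exact sq_bound c ‖s‖ (norm_nonneg s)
  have hgn : MemLp (fun s => ‖g s‖) 2 (volume : Measure (EuclideanSpace ℝ (Fin d))) := hg.norm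
  have h1 : MemLp (h • (fun s => ‖g s‖)) 1
      (volume : Measure (EuclideanSpace ℝ (Fin d))) := hgn.smul hmem
    (hpqr := ⟨by rw [inv_one, ENNReal.inv_two_add_inv_two]⟩)
  have := memLp_one_iff_integrable.mp h1
  simpa [hh, Pi.smul_apply, smul_eq_mul, funext_iff, mul_comm, Pi.mul_def] using this

private lemma coord_le_norm {d : ℕ} (j : Fin d) (s : EuclideanSpace ℝ (Fin d)) :
    |s j| ≤ ‖s‖ := by
  have := abs_real_inner_le_norm s (EuclideanSpace.single j (1:ℝ))
  simpa [EuclideanSpace.inner_single_right] using this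

private lemma re_comp (x y : ℝ) (w : ℂ) :
    (-(π:ℂ) * (x:ℂ)^2 - 2*(π:ℂ)*(y:ℂ)*w).re = -π * x^2 - 2*π*y*w.re := by
  have h : -(π:ℂ) * (x:ℂ)^2 - 2*(π:ℂ)*(y:ℂ)*w = ((-π * x^2 : ℝ) : ℂ) + ((-(2*π*y) : ℝ) : ℂ) * w := by
    push_cast; ring
  rw [h]
  simp [Complex.add_re, Complex.re_ofReal_mul, ← Complex.ofReal_pow]
  ring

private lemma abs_integrand {d : ℕ} (j : Fin d) (g : EuclideanSpace ℝ (Fin d) → ℂ)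
    (w : ℂ) (s : EuclideanSpace ℝ (Fin d)) :
    ‖Complex.exp (-(π:ℂ) * (‖s‖:ℂ)^2 - 2*(π:ℂ) * (s j : ℂ) * w) * (starRingEnd ℂ) (g s)‖
      = Real.exp (-π * ‖s‖^2 - 2*π*(s j)*w.re) * ‖g s‖ := by
  rw [norm_mul, Complex.norm_exp, re_comp]
  simp

private lemma exp_factor_le {d : ℕ} (j : Fin d) (s : EuclideanSpace ℝ (Fin d)) {M : ℝ}
    {w : ℂ} (hM : 0 ≤ M) (hw : |w.re| ≤ M) :
    Real.exp (-π * ‖s‖^2 - 2*π*(s j)*w.re) ≤ Real.exp (-π*‖s‖^2 + (2*π*M)*‖s‖) := by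
  apply Real.exp_le_exp.2
  have h1 := coord_le_norm j s
  have h2 : -(s j * w.re) ≤ |s j| * |w.re| := by
    calc -(s j * w.re) ≤ |s j * w.re| := neg_le_abs _
      _ = |s j| * |w.re| := abs_mul _ _
  nlinarith [Real.pi_pos, mul_le_mul h1 hw (abs_nonneg _) (norm_nonneg s), abs_nonneg (s j),
    abs_nonneg w.re]

private lemma cont_exp_part {d : ℕ} (j : Fin d) (w : ℂ) :
    Continuous (fun s : EuclideanSpace ℝ (Fin d) =>
      Complex.exp (-(π:ℂ) * (‖s‖:ℂ)^2 - 2*(π:ℂ) * (s j : ℂ) * w)) := by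
  apply Complex.continuous_exp.comp
  apply Continuous.sub
  · exact (continuous_const.mul ((Complex.continuous_ofReal.comp continuous_norm).pow 2))
  · exact (continuous_const.mul (Complex.continuous_ofReal.comp
      ((EuclideanSpace.proj j).continuous))).mul continuous_const

private lemma myI_differentiable (d : ℕ) (j : Fin d) (g : EuclideanSpace ℝ (Fin d) → ℂ)
    (hg : MemLp g 2 (volume : Measure (EuclideanSpace ℝ (Fin d)))) :
    Differentiable ℂ (myI d j g) := by
  intro w₀
  set M : ℝ := ‖w₀‖ + 1 with hM
  have hM0 : 0 ≤ M := by positivity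
  set bound : EuclideanSpace ℝ (Fin d) → ℝ :=
    fun s => (1 + 2*π*‖s‖) * Real.exp (-π*‖s‖^2 + (2*π*M)*‖s‖) * ‖g s‖ with hbdef
  have hbound : Integrable bound := bigBound_integrable d g hg (2*π*M)
  set F : ℂ → EuclideanSpace ℝ (Fin d) → ℂ := fun w s =>
    Complex.exp (-(π:ℂ) * (‖s‖:ℂ)^2 - 2*(π:ℂ) * (s j : ℂ) * w) * (starRingEnd ℂ) (g s) with hF
  set F' : ℂ → EuclideanSpace ℝ (Fin d) → ℂ := fun w s =>
    Complex.exp (-(π:ℂ) * (‖s‖:ℂ)^2 - 2*(π:ℂ) * (s j : ℂ) * w) * (-(2*(π:ℂ) * (s j : ℂ)))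
      * (starRingEnd ℂ) (g s) with hF'
  have hgm : AEStronglyMeasurable (fun s => (starRingEnd ℂ) (g s))
      (volume : Measure (EuclideanSpace ℝ (Fin d))) :=
    Complex.continuous_conj.comp_aestronglyMeasurable hg.1
  have hFmeas : ∀ w, AEStronglyMeasurable (F w) (volume : Measure (EuclideanSpace ℝ (Fin d))) :=
    fun w => ((cont_exp_part j w).aestronglyMeasurable).mul hgm
  have hF'meas : AEStronglyMeasurable (F' w₀) (volume : Measure (EuclideanSpace ℝ (Fin d))) := by
    apply AEStronglyMeasurable.mul _ hgm
    exact ((cont_exp_part j w₀).mul (by fun_prop)).aestronglyMeasurable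
  have habs_w : ∀ w ∈ Metric.ball w₀ 1, |w.re| ≤ M := by
    intro w hw
    have h1 : ‖w‖ ≤ M := by
      have := mem_ball_iff_norm.mp hw
      calc ‖w‖ = ‖w₀ + (w - w₀)‖ := by ring_nf
        _ ≤ ‖w₀‖ + ‖w - w₀‖ := norm_add_le _ _
        _ ≤ M := by rw [hM]; linarith
    exact (Complex.abs_re_le_norm w).trans h1
  have hFle : ∀ w, |w.re| ≤ M → ∀ s, ‖F w s‖ ≤ bound s := by
    intro w hw s
    rw [hF]
    simp only
    rw [abs_integrand]
    have h2 := exp_factor_le j s hM0 hw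
    calc Real.exp (-π * ‖s‖^2 - 2*π*(s j)*w.re) * ‖g s‖
        ≤ (1 + 2*π*‖s‖) * Real.exp (-π*‖s‖^2 + (2*π*M)*‖s‖) * ‖g s‖ := by
          apply mul_le_mul_of_nonneg_right _ (norm_nonneg _)
          calc Real.exp (-π * ‖s‖^2 - 2*π*(s j)*w.re)
              ≤ Real.exp (-π*‖s‖^2 + (2*π*M)*‖s‖) := h2
            _ ≤ (1 + 2*π*‖s‖) * Real.exp (-π*‖s‖^2 + (2*π*M)*‖s‖) := by
                have h4 : (0:ℝ) ≤ 2*π*‖s‖ * Real.exp (-π*‖s‖^2 + (2*π*M)*‖s‖) := by positivity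
                nlinarith [h4]
      _ = bound s := rfl
  have hF'le : ∀ w, |w.re| ≤ M → ∀ s, ‖F' w s‖ ≤ bound s := by
    intro w hw s
    rw [hF']
    simp only
    rw [mul_right_comm, norm_mul, abs_integrand]
    have hnn : ‖-(2*(π:ℂ) * ((s j : ℝ) : ℂ))‖ = 2*π*|s j| := by
      rw [norm_neg]
      simp [
        _root_.abs_of_nonneg Real.pi_pos.le]
    rw [hnn]
    have h2 := exp_factor_le j s hM0 hw
    have hsj := coord_le_norm j s
    have e1 : 2*π*|s j| ≤ 1 + 2*π*‖s‖ := by nlinarith [Real.pi_pos]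
    calc Real.exp (-π * ‖s‖^2 - 2*π*(s j)*w.re) * ‖g s‖ * (2*π*|s j|)
        = (Real.exp (-π * ‖s‖^2 - 2*π*(s j)*w.re) * (2*π*|s j|)) * ‖g s‖ := by ring
      _ ≤ (Real.exp (-π*‖s‖^2 + (2*π*M)*‖s‖) * (1 + 2*π*‖s‖)) * ‖g s‖ := by
          apply mul_le_mul_of_nonneg_right _ (norm_nonneg _)
          exact mul_le_mul h2 e1 (by positivity) (Real.exp_pos _).le
      _ = bound s := by rw [hbdef]; ring
  have h_diff : ∀ᵐ s ∂(volume : Measure (EuclideanSpace ℝ (Fin d))),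
      ∀ w ∈ Metric.ball w₀ 1, HasDerivAt (fun w => F w s) (F' w s) w := by
    refine Filter.Eventually.of_forall fun s => fun w _ => ?_
    have h0 : HasDerivAt (fun w : ℂ => -(π:ℂ) * (‖s‖:ℂ)^2 - 2*(π:ℂ) * (s j : ℂ) * w)
        (-(2*(π:ℂ) * (s j : ℂ))) w := by
      have h1 := (hasDerivAt_id w).const_mul (2*(π:ℂ) * (s j : ℂ))
      rw [mul_one] at h1
      exact h1.const_sub (-(π:ℂ) * (‖s‖:ℂ)^2)
    simpa [hF, hF'] using (h0.cexp).mul_const ((starRingEnd ℂ) (g s))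
  have key := hasDerivAt_integral_of_dominated_loc_of_deriv_le (Metric.ball_mem_nhds w₀ one_pos)
    (Filter.Eventually.of_forall hFmeas) (Integrable.mono' hbound (hFmeas w₀)
      (Filter.Eventually.of_forall fun s => hFle w₀ (habs_w w₀ (Metric.mem_ball_self one_pos)) s))
    hF'meas
    (Filter.Eventually.of_forall fun s => fun w hw => hF'le w (habs_w w hw) s)
    hbound h_diff
  exact key.2.differentiableAt

private lemma stft_eq (d : ℕ) (j : Fin d) (g : EuclideanSpace ℝ (Fin d) → ℂ) (a b : ℝ) :
    STFT d g (gaussW d) (EuclideanSpace.single j a) (EuclideanSpace.single j b)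
      = Complex.exp (-2*(π:ℂ)*Complex.I*(a:ℂ)*(b:ℂ) - (π:ℂ)*(a:ℂ)^2)
        * myI d j g ((a:ℂ) + (b:ℂ)*Complex.I) := by
  have hsum : ∀ t : EuclideanSpace ℝ (Fin d),
      (∑ i, t i * (EuclideanSpace.single j b) i) = t j * b := by
    intro t
    simp [EuclideanSpace.single_apply, mul_ite, mul_zero]
  rw [STFT]
  simp_rw [hsum]
  rw [show (∫ t : EuclideanSpace ℝ (Fin d),
        Complex.exp (-2 * (π : ℂ) * Complex.I * ((t j * b : ℝ) : ℂ)) * gaussW d t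
          * (starRingEnd ℂ) (g (t - EuclideanSpace.single j a)))
      = ∫ s : EuclideanSpace ℝ (Fin d),
        Complex.exp (-2 * (π : ℂ) * Complex.I * (((s + EuclideanSpace.single j a) j * b : ℝ) : ℂ))
          * gaussW d (s + EuclideanSpace.single j a)
          * (starRingEnd ℂ) (g (s + EuclideanSpace.single j a - EuclideanSpace.single j a))
      from (MeasureTheory.integral_add_right_eq_self _ (EuclideanSpace.single j a)).symm]
  rw [myI, ← MeasureTheory.integral_const_mul]
  apply MeasureTheory.integral_congr_ae
  refine Filter.Eventually.of_forall fun s => ?_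
  have hcoord : (s + EuclideanSpace.single j a) j = s j + a := by
    simp [EuclideanSpace.single_apply]
  have hns : ‖s + EuclideanSpace.single j a‖^2 = ‖s‖^2 + 2*(a * s j) + a^2 := by
    rw [norm_add_sq_real]
    have h1 : inner ℝ s (EuclideanSpace.single j a) = a * s j := by
      rw [EuclideanSpace.inner_single_right]; simp [mul_comm]
    rw [h1, EuclideanSpace.norm_single]
    simp [sq_abs]
  dsimp only
  rw [add_sub_cancel_right, hcoord, gaussW]
  rw [show ((‖s + EuclideanSpace.single j a‖ : ℂ))^2
      = ((‖s‖^2 + 2*(a * s j) + a^2 : ℝ) : ℂ) by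
    rw [← Complex.ofReal_pow, hns]]
  rw [← mul_assoc (Complex.exp (-2*(π:ℂ)*Complex.I*(a:ℂ)*(b:ℂ) - (π:ℂ)*(a:ℂ)^2)),
    ← Complex.exp_add, ← Complex.exp_add]
  congr 2
  push_cast
  ring

private lemma abs_phi_eq (d : ℕ) (j : Fin d) (g : EuclideanSpace ℝ (Fin d) → ℂ) (a b : ℝ) :
    ‖(Complex.exp (-(π:ℂ)*((a:ℂ) + (b:ℂ)*Complex.I)^2/2)
        * myI d j g ((a:ℂ)+(b:ℂ)*Complex.I))‖
      = Real.exp (π*(a^2+b^2)/2)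
        * ‖(STFT d g (gaussW d) (EuclideanSpace.single j a)
            (EuclideanSpace.single j b))‖ := by
  rw [stft_eq d j g a b, norm_mul, norm_mul, Complex.norm_exp, Complex.norm_exp, ← mul_assoc,
    ← Real.exp_add]
  congr 2
  have h1 : (-(π:ℂ)*((a:ℂ)+(b:ℂ)*Complex.I)^2/2)
      = (((-π*(a^2-b^2)/2) : ℝ) : ℂ) + (((-π*a*b):ℝ):ℂ)*Complex.I := by
    push_cast
    rw [show ((a:ℂ)+(b:ℂ)*Complex.I)^2 = (a:ℂ)^2 + 2*(a:ℂ)*(b:ℂ)*Complex.I + (b:ℂ)^2*(Complex.I^2) by ring, Complex.I_sq]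
    ring
  have h2 : (-2*(π:ℂ)*Complex.I*(a:ℂ)*(b:ℂ) - (π:ℂ)*(a:ℂ)^2)
      = (((-π*a^2):ℝ):ℂ) + (((-2*π*a*b):ℝ):ℂ)*Complex.I := by push_cast; ring
  rw [h1, h2]
  simp [Complex.add_re, Complex.ofReal_re, Complex.re_ofReal_mul, Complex.I_re,
    ← Complex.ofReal_pow]
  ring

theorem stmt4 (d : ℕ) (hd : 1 ≤ d)
    (N R : ℝ) (hN : 1 < N) (hR : 0 < R)
    (g : EuclideanSpace ℝ (Fin d) → ℂ)
    (hg : MemLp g 2 (volume : Measure (EuclideanSpace ℝ (Fin d))))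
    (hg0 : ¬ g =ᵐ[(volume : Measure (EuclideanSpace ℝ (Fin d)))] 0)
    (h : ∀ x ω : EuclideanSpace ℝ (Fin d), ‖x‖ ^ 2 + ‖ω‖ ^ 2 > R ^ 2 →
      ‖STFT d g (gaussW d) x ω‖
        < ‖L2inner d (gaussW d) g‖ / N) :
    R ≥ Real.sqrt (2 * Real.log N / π) := by
  set j : Fin d := ⟨0, hd⟩ with hj
  set A : ℝ := ‖L2inner d (gaussW d) g‖ with hA
  have hN0 : (0:ℝ) < N := lt_trans one_pos hN
  -- A > 0
  have hAN : 0 < A / N := by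
    have h0 := h (EuclideanSpace.single j (R+1)) 0 (by
      simp [EuclideanSpace.norm_single, sq_abs]
      nlinarith [hR])
    exact lt_of_le_of_lt (norm_nonneg _) h0
  have hApos : 0 < A := by
    rcases div_pos_iff.mp hAN with ⟨h1, _⟩ | ⟨_, h2⟩
    · exact h1
    · linarith
  -- the entire function φ
  set φ : ℂ → ℂ := fun w => Complex.exp (-(π:ℂ)*w^2/2) * myI d j g w with hφ
  have hφdiff : Differentiable ℂ φ := by
    apply Differentiable.mul _ (myI_differentiable d j g hg)
    apply Differentiable.cexp
    apply Differentiable.div_const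
    exact (differentiable_id.pow 2).const_mul _
  have hφ0 : φ 0 = L2inner d (gaussW d) g := by
    rw [hφ]
    simp only
    rw [myI, L2inner]
    simp [gaussW]
  -- for every r > R we get sqrt bound
  have key : ∀ r, R < r → Real.sqrt (2 * Real.log N / π) ≤ r := by
    intro r hr
    have hr0 : 0 < r := hR.trans hr
    have hfr : frontier (Metric.ball (0:ℂ) r) = Metric.sphere 0 r :=
      frontier_ball 0 hr0.ne'
    have hbd : ∀ z ∈ frontier (Metric.ball (0:ℂ) r), ‖φ z‖ ≤ A/N * Real.exp (π*r^2/2) := by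
      intro z hz
      rw [hfr, Metric.mem_sphere] at hz
      have habs : ‖z‖ = r := by simpa [Complex.dist_eq] using hz
      have hab : z.re^2 + z.im^2 = r^2 := by
        have h1 := Complex.sq_norm z
        rw [habs, Complex.normSq_apply] at h1
        nlinarith [h1]
      have hgt : ‖EuclideanSpace.single j z.re‖^2 + ‖EuclideanSpace.single j z.im‖^2 > R^2 := by
        simp only [EuclideanSpace.norm_single, Real.norm_eq_abs]
        nlinarith [_root_.sq_abs z.re, _root_.sq_abs z.im, hab, hr, hR]
      have hlt := h _ _ hgt
      have hz' : (z.re:ℂ) + (z.im:ℂ)*Complex.I = z := Complex.re_add_im z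
      calc ‖φ z‖
          = ‖(Complex.exp (-(π:ℂ)*((z.re:ℂ)+(z.im:ℂ)*Complex.I)^2/2)
              * myI d j g ((z.re:ℂ)+(z.im:ℂ)*Complex.I))‖ := by rw [hz']
        _ = Real.exp (π*(z.re^2+z.im^2)/2)
              * ‖(STFT d g (gaussW d) (EuclideanSpace.single j z.re)
                  (EuclideanSpace.single j z.im))‖ := abs_phi_eq d j g z.re z.im
        _ ≤ A/N * Real.exp (π*r^2/2) := by
            rw [hab, mul_comm]
            exact mul_le_mul_of_nonneg_right hlt.le (Real.exp_pos _).le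
    have hmax := Complex.norm_le_of_forall_mem_frontier_norm_le Metric.isBounded_ball
      (hφdiff.diffContOnCl) hbd (subset_closure (Metric.mem_ball_self hr0))
    have hmax' : A ≤ A/N * Real.exp (π*r^2/2) := by
      calc A = ‖φ 0‖ := by rw [hφ0]
        _ ≤ A/N * Real.exp (π*r^2/2) := hmax
    have h2 : A * N ≤ A * Real.exp (π*r^2/2) := by
      have h3 := mul_le_mul_of_nonneg_right hmax' hN0.le
      rw [show A/N * Real.exp (π*r^2/2) * N = A * Real.exp (π*r^2/2) by
        field_simp] at h3
      exact h3
    have hNE : N ≤ Real.exp (π*r^2/2) := le_of_mul_le_mul_left h2 hApos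
    have hlog : Real.log N ≤ π*r^2/2 := (Real.log_le_iff_le_exp hN0).mpr hNE
    have hsq : 2*Real.log N/π ≤ r^2 := by
      rw [div_le_iff₀ Real.pi_pos]
      nlinarith [hlog]
    calc Real.sqrt (2*Real.log N/π) ≤ Real.sqrt (r^2) := Real.sqrt_le_sqrt hsq
      _ = r := Real.sqrt_sq hr0.le
  by_contra hc
  push_neg at hc
  set S : ℝ := Real.sqrt (2 * Real.log N / π) with hS
  have h1 : R < (R + S)/2 := by linarith
  have h2 := key ((R + S)/2) h1
  linarith
end

section
/- Sharpness of the cylinder bound: let d ≥ 1, let g(t) = e^{-π|t|²} be the standard Gaussian on ℝ^d, let 0 < λ ≤ 1 and set f_λ(t) = e^{-πλ²|t|²}. Then for N > 1 and R > 0 the condition |V_g f_λ(x,ω)| ≤ |⟨f_λ,g⟩|/N for every x ∈ ℝ^d and every ω ∈ ℝ^d with |ω| = R holds if and only if R ≥ √((1+λ²) log N / π). In particular, the lower bound R > √(log N / π) in the cylinder uncertainty principle cannot be improved to any larger constant. -/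
open MeasureTheory Complex Real

open RealInnerProductSpace in
lemma key_ident (p l s A B C D E : ℝ) (hs : s = 1 + l^2) (hs0 : s ≠ 0) :
    -2*(p:ℂ)*Complex.I*((D + s⁻¹*E : ℝ):ℂ)
      + (-(p:ℂ)*(l:ℂ)^2*((A + 2*(s⁻¹*B) + (s⁻¹)^2*C : ℝ):ℂ))
      + (-(p:ℂ)*((A + 2*(-(l^2/s)*B) + (l^2/s)^2*C : ℝ):ℂ))
    = (((-p*l^2*C/s : ℝ):ℂ) + ((-2*p*E/s : ℝ):ℂ)*Complex.I)
      + (-((p:ℂ)*((s:ℝ):ℂ)) * ((A:ℝ):ℂ) + (-2*(p:ℂ)*Complex.I) * ((D:ℝ):ℂ)) := by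
  have hC : (s:ℂ) ≠ 0 := by exact_mod_cast hs0
  have hsC : (s:ℂ) = 1 + (l:ℂ)^2 := by exact_mod_cast hs
  push_cast
  have h2 : (s:ℂ)⁻¹ * (s:ℂ) = 1 := inv_mul_cancel₀ hC
  linear_combination ((p:ℂ)*A + (p:ℂ)*(l:ℂ)^2*(C:ℂ)*((s:ℂ))⁻¹^2) * hsC
    - ((p:ℂ)*(l:ℂ)^2*(C:ℂ)*((s:ℂ))⁻¹) * h2

open RealInnerProductSpace in
lemma stft_eval (d : ℕ) (lam : ℝ) (hlam0 : 0 < lam)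
    (x ω : EuclideanSpace ℝ (Fin d)) :
    STFT d (gaussW d) (fun t => Complex.exp (-(π : ℂ) * (lam : ℂ) ^ 2 * (‖t‖ : ℂ) ^ 2)) x ω
      = ((1/(1+lam^2) : ℝ) : ℂ) ^ ((d : ℂ)/2)
        * Complex.exp (((-π * lam^2 * ‖x‖^2 / (1+lam^2) : ℝ) : ℂ)
            + ((-2*π*(⟪x, ω⟫)/(1+lam^2) : ℝ) : ℂ) * Complex.I)
        * Complex.exp (((-π * ‖ω‖^2 / (1+lam^2) : ℝ) : ℂ)) := by
  have hs : (0:ℝ) < 1 + lam^2 := by positivity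
  have hsne : (1:ℝ) + lam^2 ≠ 0 := hs.ne'
  have hsneC : ((1+lam^2 : ℝ):ℂ) ≠ 0 := by exact_mod_cast hsne
  have hπC : (π:ℂ) ≠ 0 := Complex.ofReal_ne_zero.mpr Real.pi_ne_zero
  have hb : 0 < ((π:ℂ) * ((1+lam^2 : ℝ):ℂ)).re := by
    rw [← Complex.ofReal_mul, Complex.ofReal_re]
    positivity
  set a : EuclideanSpace ℝ (Fin d) := (1+lam^2)⁻¹ • x with ha_def
  set K : ℂ := ((-π * lam^2 * ‖x‖^2 / (1+lam^2) : ℝ) : ℂ)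
      + ((-2*π*(⟪x, ω⟫)/(1+lam^2) : ℝ) : ℂ) * Complex.I with hK_def
  have h1 : STFT d (gaussW d)
      (fun t => Complex.exp (-(π : ℂ) * (lam : ℂ) ^ 2 * (‖t‖ : ℂ) ^ 2)) x ω
      = ∫ t : EuclideanSpace ℝ (Fin d),
          Complex.exp (-2 * (π : ℂ) * Complex.I * ((⟪t, ω⟫ : ℝ) : ℂ)
            + (-(π : ℂ) * (lam:ℂ)^2 * (‖t‖:ℂ)^2) + (-(π:ℂ) * (‖t - x‖:ℂ)^2)) := by
    unfold STFT gaussW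
    congr 1
    funext t
    have hsum : (∑ j, t j * ω j : ℝ) = ⟪t, ω⟫ := by
      rw [PiLp.inner_apply]; simp [RCLike.inner_apply]; exact Finset.sum_congr rfl (fun j _ => mul_comm _ _)
    have hconj : (starRingEnd ℂ) (Complex.exp (-(π : ℂ) * (‖t - x‖ : ℂ) ^ 2))
        = Complex.exp (-(π : ℂ) * (‖t - x‖ : ℂ) ^ 2) := by
      rw [← Complex.exp_conj]
      congr 1
      simp [Complex.conj_ofReal]
    rw [hconj, hsum, ← Complex.exp_add, ← Complex.exp_add]
  rw [h1]
  rw [show (∫ t : EuclideanSpace ℝ (Fin d),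
        Complex.exp (-2 * (π : ℂ) * Complex.I * ((⟪t, ω⟫ : ℝ) : ℂ)
          + (-(π : ℂ) * (lam:ℂ)^2 * (‖t‖:ℂ)^2) + (-(π:ℂ) * (‖t - x‖:ℂ)^2)))
      = ∫ u : EuclideanSpace ℝ (Fin d),
        Complex.exp (-2 * (π : ℂ) * Complex.I * ((⟪u + a, ω⟫ : ℝ) : ℂ)
          + (-(π : ℂ) * (lam:ℂ)^2 * (‖u + a‖:ℂ)^2) + (-(π:ℂ) * (‖u + a - x‖:ℂ)^2))
      from (integral_add_right_eq_self _ a).symm]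
  have h3 : ∀ u : EuclideanSpace ℝ (Fin d),
      Complex.exp (-2 * (π : ℂ) * Complex.I * ((⟪u + a, ω⟫ : ℝ) : ℂ)
          + (-(π : ℂ) * (lam:ℂ)^2 * (‖u + a‖:ℂ)^2) + (-(π:ℂ) * (‖u + a - x‖:ℂ)^2))
      = Complex.exp K * Complex.exp (-((π:ℂ) * ((1+lam^2 : ℝ):ℂ)) * (‖u‖:ℂ)^2
          + (-2 * (π:ℂ) * Complex.I) * ((⟪ω, u⟫ : ℝ) : ℂ)) := by
    intro u
    have hax : a - x = (-(lam^2/(1+lam^2))) • x := by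
      rw [ha_def]
      rw [show (1+lam^2)⁻¹ • x - x = ((1+lam^2)⁻¹ - 1) • x by rw [sub_smul, one_smul]]
      congr 1
      field_simp
      ring
    have hn1 : ‖u + a‖^2 = ‖u‖^2 + 2*((1+lam^2)⁻¹*⟪u, x⟫) + ((1+lam^2)⁻¹)^2*‖x‖^2 := by
      rw [ha_def, norm_add_sq_real, real_inner_smul_right, norm_smul]
      rw [norm_inv, Real.norm_eq_abs, abs_of_pos hs]
      ring
    have hn2 : ‖u + a - x‖^2
        = ‖u‖^2 + 2*(-(lam^2/(1+lam^2))*⟪u, x⟫) + (lam^2/(1+lam^2))^2*‖x‖^2 := by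
      rw [add_sub_assoc, hax, norm_add_sq_real, real_inner_smul_right, norm_smul]
      rw [Real.norm_eq_abs, abs_neg, _root_.abs_of_nonneg (div_nonneg (sq_nonneg lam) hs.le)]
      ring
    have hσ : ⟪u + a, ω⟫ = ⟪u, ω⟫ + (1+lam^2)⁻¹*⟪x, ω⟫ := by
      rw [ha_def, inner_add_left, real_inner_smul_left]
    have hcomm : ⟪ω, u⟫ = ⟪u, ω⟫ := real_inner_comm u ω
    rw [← Complex.exp_add]
    congr 1
    rw [show ((‖u + a‖:ℂ))^2 = ((‖u + a‖^2 : ℝ) : ℂ) by push_cast; ring,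
        show ((‖u + a - x‖:ℂ))^2 = ((‖u + a - x‖^2 : ℝ) : ℂ) by push_cast; ring,
        show ((‖u‖:ℂ))^2 = ((‖u‖^2 : ℝ) : ℂ) by push_cast; ring,
        hn1, hn2, hσ, hcomm, hK_def]
    exact key_ident π lam (1+lam^2) (‖u‖^2) (⟪u, x⟫) (‖x‖^2) (⟪u, ω⟫) (⟪x, ω⟫) rfl hsne
  rw [integral_congr_ae (Filter.Eventually.of_forall h3), integral_const_mul,
    GaussianFourier.integral_cexp_neg_mul_sq_norm_add hb (-2 * (π:ℂ) * Complex.I) ω,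
    finrank_euclideanSpace_fin]
  have e1 : (π:ℂ) / ((π:ℂ) * ((1+lam^2 : ℝ):ℂ)) = ((1/(1+lam^2) : ℝ) : ℂ) := by
    rw [Complex.ofReal_div, Complex.ofReal_one, div_mul_eq_div_div, div_self hπC]
  have e2 : (-2 * (π:ℂ) * Complex.I)^2 * (‖ω‖:ℂ)^2 / (4*((π:ℂ) * ((1+lam^2 : ℝ):ℂ)))
      = ((-π * ‖ω‖^2 / (1+lam^2) : ℝ) : ℂ) := by
    rw [show ((-2) * (π:ℂ) * Complex.I)^2 = -(4*(π:ℂ)^2) by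
      rw [mul_pow, mul_pow, Complex.I_sq]; ring]
    rw [Complex.ofReal_div, div_eq_div_iff
      (mul_ne_zero (by norm_num) (mul_ne_zero hπC hsneC)) hsneC]
    push_cast
    ring
  rw [e1, e2, hK_def]
  ring

lemma l2_eval (d : ℕ) (lam : ℝ) (hlam0 : 0 < lam) :
    L2inner d (fun t => Complex.exp (-(π : ℂ) * (lam : ℂ) ^ 2 * (‖t‖ : ℂ) ^ 2)) (gaussW d)
      = ((1/(1+lam^2) : ℝ) : ℂ) ^ ((d : ℂ)/2) := by
  have hπC : (π:ℂ) ≠ 0 := Complex.ofReal_ne_zero.mpr Real.pi_ne_zero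
  have hb : 0 < ((π:ℂ) * ((1+lam^2 : ℝ):ℂ)).re := by
    rw [← Complex.ofReal_mul, Complex.ofReal_re]
    positivity
  have h1 : L2inner d (fun t => Complex.exp (-(π : ℂ) * (lam : ℂ) ^ 2 * (‖t‖ : ℂ) ^ 2))
      (gaussW d)
      = ∫ t : EuclideanSpace ℝ (Fin d),
          Complex.exp (-((π:ℂ) * ((1+lam^2 : ℝ):ℂ)) * (‖t‖:ℂ)^2) := by
    unfold L2inner gaussW
    congr 1
    funext t
    have hconj : (starRingEnd ℂ) (Complex.exp (-(π : ℂ) * (‖t‖ : ℂ) ^ 2))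
        = Complex.exp (-(π : ℂ) * (‖t‖ : ℂ) ^ 2) := by
      rw [← Complex.exp_conj]
      congr 1
      simp [Complex.conj_ofReal]
    rw [hconj, ← Complex.exp_add]
    congr 1
    push_cast
    ring
  rw [h1, GaussianFourier.integral_cexp_neg_mul_sq_norm hb, finrank_euclideanSpace_fin,
    show (π:ℂ) / ((π:ℂ) * ((1+lam^2 : ℝ):ℂ)) = ((1/(1+lam^2) : ℝ) : ℂ) by
      rw [Complex.ofReal_div, Complex.ofReal_one, div_mul_eq_div_div, div_self hπC]]

theorem stmt11 (d : ℕ) (hd : 1 ≤ d) (lam : ℝ) (hlam0 : 0 < lam) (hlam1 : lam ≤ 1)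
    (f : EuclideanSpace ℝ (Fin d) → ℂ)
    (hfdef : f = fun t => Complex.exp (-(π : ℂ) * (lam : ℂ) ^ 2 * (‖t‖ : ℂ) ^ 2))
    (N R : ℝ) (hN : 1 < N) (hR : 0 < R) :
    (∀ x ω : EuclideanSpace ℝ (Fin d), ‖ω‖ = R →
        ‖STFT d (gaussW d) f x ω‖
          ≤ ‖L2inner d f (gaussW d)‖ / N)
      ↔ R ≥ Real.sqrt ((1 + lam ^ 2) * Real.log N / π) := by
  subst hfdef
  have hs : (0:ℝ) < 1 + lam^2 := by positivity
  have hπ : (0:ℝ) < π := Real.pi_pos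
  have hN0 : (0:ℝ) < N := by linarith
  have hlogN : 0 < Real.log N := Real.log_pos hN
  set M : ℝ := (1/(1+lam^2)) ^ ((d:ℝ)/2) with hM_def
  have hM : 0 < M := Real.rpow_pos_of_pos (by positivity) _
  have habsM : ‖((1/(1+lam^2) : ℝ) : ℂ) ^ ((d : ℂ)/2)‖ = M := by
    rw [Complex.norm_cpow_eq_rpow_re_of_pos (by positivity)]
    norm_num
    rw [hM_def, one_div]
  have habs_stft : ∀ x ω : EuclideanSpace ℝ (Fin d),
      ‖STFT d (gaussW d)
        (fun t => Complex.exp (-(π : ℂ) * (lam : ℂ) ^ 2 * (‖t‖ : ℂ) ^ 2)) x ω‖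
      = M * Real.exp (-π * lam^2 * ‖x‖^2 / (1+lam^2))
          * Real.exp (-π * ‖ω‖^2 / (1+lam^2)) := by
    intro x ω
    have hre : ∀ r1 r2 : ℝ, ((r1:ℂ) + (r2:ℂ)*Complex.I).re = r1 := by
      intro r1 r2; simp
    rw [stft_eval d lam hlam0 x ω, norm_mul, norm_mul, habsM, Complex.norm_exp,
      Complex.norm_exp, hre, Complex.ofReal_re]
  have habs_l2 : ‖L2inner d
      (fun t => Complex.exp (-(π : ℂ) * (lam : ℂ) ^ 2 * (‖t‖ : ℂ) ^ 2)) (gaussW d)‖ = M := by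
    rw [l2_eval d lam hlam0, habsM]
  constructor
  · intro h
    set ω0 : EuclideanSpace ℝ (Fin d) :=
      R • (EuclideanSpace.single (⟨0, hd⟩ : Fin d) (1:ℝ)) with hω0_def
    have hω0 : ‖ω0‖ = R := by
      rw [hω0_def, norm_smul, EuclideanSpace.norm_single]
      simp [abs_of_pos hR]
    have h0 := h 0 ω0 hω0
    rw [habs_stft, habs_l2, hω0] at h0
    simp only [norm_zero] at h0
    have h1 : Real.exp (-π * R^2 / (1+lam^2)) ≤ 1/N := by
      have : M * Real.exp (-π * R^2 / (1+lam^2)) ≤ M * (1/N) := by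
        calc M * Real.exp (-π * R^2 / (1+lam^2))
            = M * Real.exp (-π * lam^2 * 0^2 / (1+lam^2))
              * Real.exp (-π * R^2 / (1+lam^2)) := by norm_num
          _ ≤ M / N := h0
          _ = M * (1/N) := by ring
      exact (mul_le_mul_iff_right₀ hM).mp this
    have h2 : -π * R^2 / (1+lam^2) ≤ -Real.log N := by
      have := Real.log_le_log (Real.exp_pos _) h1
      rwa [Real.log_exp, one_div, Real.log_inv] at this
    have h3 : (1 + lam^2) * Real.log N / π ≤ R^2 := by
      rw [div_le_iff₀ hπ]
      have h2' := (div_le_iff₀ hs).mp h2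
      nlinarith
    calc Real.sqrt ((1 + lam^2) * Real.log N / π) ≤ Real.sqrt (R^2) :=
          Real.sqrt_le_sqrt h3
      _ = R := Real.sqrt_sq hR.le
  · intro hge x ω hω
    rw [habs_stft, habs_l2, hω]
    have harg : 0 ≤ (1 + lam^2) * Real.log N / π := by positivity
    have h1 : (1 + lam^2) * Real.log N / π ≤ R^2 := by
      nlinarith [Real.sq_sqrt harg, Real.sqrt_nonneg ((1 + lam^2) * Real.log N / π)]
    have h2 : Real.exp (-π * R^2 / (1+lam^2)) ≤ 1/N := by
      rw [show (1/N : ℝ) = Real.exp (-Real.log N) by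
        rw [Real.exp_neg, Real.exp_log hN0, one_div]]
      apply Real.exp_le_exp.mpr
      rw [div_le_iff₀ hs]
      rw [div_le_iff₀ hπ] at h1
      nlinarith
    have h3 : Real.exp (-π * lam^2 * ‖x‖^2 / (1+lam^2)) ≤ 1 := by
      apply Real.exp_le_one_iff.mpr
      have h0 : 0 ≤ π * lam^2 * ‖x‖^2 / (1+lam^2) := by positivity
      rw [show -π * lam^2 * ‖x‖^2 / (1+lam^2) = -(π * lam^2 * ‖x‖^2 / (1+lam^2)) by ring]
      exact neg_nonpos.mpr h0
    calc M * Real.exp (-π * lam^2 * ‖x‖^2 / (1+lam^2)) * Real.exp (-π * R^2 / (1+lam^2))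
        ≤ M * 1 * (1/N) := by
          apply mul_le_mul (mul_le_mul le_rfl h3 (Real.exp_pos _).le hM.le) h2
            (Real.exp_pos _).le (by positivity)
      _ = M / N := by ring
end
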